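/- Let γ ∈ (0,1) and let p_t(b) satisfy p₁(b) = (γb/(γb+1))^γ and p_t(b) = [ p_{t-1}(γb+1) · γb/(γb + 1 - p_{t-1}(γb+1)) ]^γ, with 0 < p_t(b) < 1. If p_t(b)/p_{t-1}(b) ≥ 1 for all b > 0, then p_{t+1}(b)/p_t(b) = [ (p_t(b₁)/p_{t-1}(b₁)) · (γb + 1 - p_{t-1}(b₁))/(γb + 1 - p_t(b₁)) ]^γ ≥ 1 for all b > 0, where b₁ = γb + 1. -/

import Mathlib

theorem pgss_mono_t_step (γ : ℝ) (hγ0 : 0 < γ) (hγ1 : γ < 1)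
    (p : ℕ → ℝ → ℝ)
    (h1 : ∀ b : ℝ, 0 < b → p 1 b = (γ * b / (γ * b + 1)) ^ γ)
    (hrec : ∀ t : ℕ, 1 ≤ t → ∀ b : ℝ, 0 < b →
      p (t + 1) b = (p t (γ * b + 1) * (γ * b) / (γ * b + 1 - p t (γ * b + 1))) ^ γ)
    (hbound : ∀ t : ℕ, 1 ≤ t → ∀ b : ℝ, 0 < b → 0 < p t b ∧ p t b < 1)
    (t : ℕ) (ht : 1 ≤ t)
    (hInd : ∀ b : ℝ, 0 < b → p (t + 1) b / p t b ≥ 1) :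
    ∀ b : ℝ, 0 < b →
      p (t + 2) b / p (t + 1) b
        = ((p (t + 1) (γ * b + 1) / p t (γ * b + 1)) *
            ((γ * b + 1 - p t (γ * b + 1)) / (γ * b + 1 - p (t + 1) (γ * b + 1)))) ^ γ ∧
      p (t + 2) b / p (t + 1) b ≥ 1 := by
  intro b hb
  have hgb : 0 < γ * b := mul_pos hγ0 hb
  have hb1 : 0 < γ * b + 1 := by linarith
  set A := p t (γ * b + 1) with hA
  set B := p (t + 1) (γ * b + 1) with hB
  obtain ⟨hA0, hA1⟩ := hbound t ht (γ * b + 1) hb1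
  obtain ⟨hB0, hB1⟩ := hbound (t + 1) (by omega) (γ * b + 1) hb1
  have hAB : B / A ≥ 1 := hInd (γ * b + 1) hb1
  have hBA : A ≤ B := by
    have := (one_le_div hA0).mp hAB; linarith
  have hdA : 0 < γ * b + 1 - A := by linarith
  have hdB : 0 < γ * b + 1 - B := by linarith
  have hx : 0 < B * (γ * b) / (γ * b + 1 - B) := by positivity
  have hy : 0 < A * (γ * b) / (γ * b + 1 - A) := by positivity
  have e2 : p (t + 2) b = (B * (γ * b) / (γ * b + 1 - B)) ^ γ := by
    have := hrec (t + 1) (by omega) b hb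
    simpa using this
  have e1 : p (t + 1) b = (A * (γ * b) / (γ * b + 1 - A)) ^ γ := by
    have := hrec t ht b hb
    simpa using this
  have key : p (t + 2) b / p (t + 1) b
      = ((B / A) * ((γ * b + 1 - A) / (γ * b + 1 - B))) ^ γ := by
    rw [e1, e2, ← Real.div_rpow hx.le hy.le]
    congr 1
    field_simp
  refine ⟨key, ?_⟩
  rw [key]
  have hbase : 1 ≤ (B / A) * ((γ * b + 1 - A) / (γ * b + 1 - B)) := by
    have h2 : 1 ≤ (γ * b + 1 - A) / (γ * b + 1 - B) := by
      rw [le_div_iff₀ hdB]; linarith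
    nlinarith
  exact Real.one_le_rpow hbase hγ0.le
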